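/- A vector space V is a unimodular stable right g*⋊g-module (i.e. Σ_i (v·X_i)◁θ^i = 0) if and only if the twisted module V ⊗ ℂ_δ, where the g-action is deformed by the trace character δ of the adjoint representation, is a stable right g*⋊g-module (i.e. Σ_i ((v⊗1)◁θ^i)·X_i = 0). -/

import Mathlib

/-- `V` is a unimodular stable right `g* ⋊ g`-module iff the twisted module
`V ⊗ ℂ_δ` (the `g`-action deformed by the trace character `δ(X) = tr(ad X)`, the `S(g*)`-action
unchanged) is a stable right `g* ⋊ g`-module.  Everything is expressed through a basis
`X_1,...,X_N` of `g` with structure constants `[X_j, X_l] = Σ_k C k j l • X_k`: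
the right `g`-action is `v·X_j = ρ j v`, the `S(g*)`-action is `v ◁ θ^t = s t v`,
the `g* ⋊ g`-module compatibility is `(v·X_j) ◁ θ^t = v ◁ (X_j ▷ θ^t) + (v ◁ θ^t)·X_j`
with `X_j ▷ θ^t = -Σ_k C t j k θ^k`, unimodular stability is `Σ_i (v·X_i) ◁ θ^i = 0`
and stability is `Σ_i (v ◁ θ^i)·X_i = 0`. -/
theorem unimodular_stable_iff_twist_stable
    (N : ℕ) (C : Fin N → Fin N → Fin N → ℂ)
    (hC_anti : ∀ k j l, C k j l = -C k l j)
    (hC_jacobi : ∀ a b c d,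
      ∑ e, (C e b c * C d e a + C e c a * C d e b + C e a b * C d e c) = 0)
    (V : Type) [AddCommGroup V] [Module ℂ V]
    (ρ s : Fin N → Module.End ℂ V)
    -- `ρ` is a right `g`-module structure and `s` a right `S(g*)`-module structure:
    (hρ : ∀ j l, ∑ k, C k j l • ρ k = ρ l * ρ j - ρ j * ρ l)
    (hs : ∀ i j, s i * s j = s j * s i)
    -- the trace character of the adjoint representation:
    (δ : Fin N → ℂ) (hδ : ∀ j, δ j = ∑ k, C k j k)
    -- the twisted action on `V ⊗ ℂ_δ`:
    (ρδ : Fin N → Module.End ℂ V) (hρδ : ∀ j, ρδ j = ρ j + δ j • 1) :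
    -- `V` is a unimodular stable right `g* ⋊ g`-module
    ((∀ j t, s t * ρ j = ρ j * s t - ∑ k, C t j k • s k) ∧
      (∀ v, ∑ i, s i (ρ i v) = 0))
    ↔ -- iff `V ⊗ ℂ_δ` is a stable right `g* ⋊ g`-module
    ((∀ j t, s t * ρδ j = ρδ j * s t - ∑ k, C t j k • s k) ∧
      (∀ v, ∑ i, ρδ i (s i v) = 0)) := by
  -- the twisted compatibility is the same as the untwisted one
  have hcompat : ∀ j t, (s t * ρδ j = ρδ j * s t - ∑ k, C t j k • s k)
      ↔ (s t * ρ j = ρ j * s t - ∑ k, C t j k • s k) := by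
    intro j t
    rw [hρδ, mul_add, add_mul, mul_smul_comm, smul_mul_assoc, mul_one, one_mul,
      add_sub_right_comm, add_left_inj]
  -- the column sums of C give -δ
  have hsum : ∀ k : Fin N, ∑ i, C i i k = -δ k := by
    intro k
    rw [hδ]
    rw [← Finset.sum_neg_distrib]
    exact Finset.sum_congr rfl fun i _ => by rw [hC_anti i i k]
  -- given compatibility, the two stability sums agree
  have heq : (∀ j t, s t * ρ j = ρ j * s t - ∑ k, C t j k • s k) →
      ∀ v, ∑ i, s i (ρ i v) = ∑ i, ρδ i (s i v) := by
    intro h1 v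
    have h1' : ∀ i : Fin N, s i (ρ i v) = ρ i (s i v) - ∑ k, C i i k • s k v := by
      intro i
      have := congrArg (fun f : Module.End ℂ V => f v) (h1 i i)
      simpa using this
    calc ∑ i, s i (ρ i v)
        = ∑ i, (ρ i (s i v) - ∑ k, C i i k • s k v) := Finset.sum_congr rfl fun i _ => h1' i
      _ = ∑ i, ρ i (s i v) - ∑ i, ∑ k, C i i k • s k v := Finset.sum_sub_distrib _ _
      _ = ∑ i, ρ i (s i v) - ∑ k, (∑ i, C i i k) • s k v := by
          rw [Finset.sum_comm]
          simp [Finset.sum_smul]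
      _ = ∑ i, ρ i (s i v) + ∑ k, δ k • s k v := by
          simp [hsum, sub_eq_add_neg, ← Finset.sum_neg_distrib]
      _ = ∑ i, ρδ i (s i v) := by
          rw [← Finset.sum_add_distrib]
          exact Finset.sum_congr rfl fun i _ => by simp [hρδ]
  constructor
  · rintro ⟨h1, h2⟩
    refine ⟨fun j t => (hcompat j t).mpr (h1 j t), fun v => ?_⟩
    rw [← heq h1 v]; exact h2 v
  · rintro ⟨h1, h2⟩
    have h1' := fun j t => (hcompat j t).mp (h1 j t)
    exact ⟨h1', fun v => by rw [heq h1' v]; exact h2 v⟩
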